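/- Let B be a balanced bipartite graph with parts V1, V2 of size n each, n odd, and minimum degree at least n/2 + 1 (equivalently, at least (n+3)/2). For a vertex subset S with |S| = n + 1, the induced subgraph B[S] is a forest if and only if min(|S ∩ V1|, |S ∩ V2|) = 1. -/

import Mathlib

open Finset SimpleGraph


lemma star_acyclic {V : Type*} [DecidableEq V] {G : SimpleGraph V} (c : V)
    (hc : ∀ u v, G.Adj u v → u = c ∨ v = c) : G.IsAcyclic := by
  have key : ∀ (w : G.Walk c c), ¬ w.IsCycle := by
    intro w hw
    cases w with
    | nil => exact hw.ne_nil rfl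
    | @cons _ x _ h q =>
      cases q with
      | nil => exact G.irrefl h
      | @cons _ y _ h' q' =>
        have hyc : y = c := (hc _ _ h').resolve_left h.ne'
        subst hyc
        cases q' with
        | nil =>
          have h3 := hw.three_le_length
          simp at h3
        | @cons _ z _ h'' q'' =>
          have hnd := hw.support_nodup
          simp [Walk.support_cons] at hnd
  intro v w hw
  have hlen := hw.three_le_length
  have hcmem : c ∈ w.support := by
    cases w with
    | nil => simp at hlen
    | @cons _ x _ h q =>
      rcases hc _ _ h with h1 | h2
      · rw [← h1]; exact Walk.start_mem_support _
      · rw [← h2]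
        simp [Walk.support_cons]
  exact key (w.rotate c hcmem) (hw.rotate hcmem)


lemma acyclic_first_edge {V : Type*} [DecidableEq V] {G : SimpleGraph V} (h : G.IsAcyclic)
    {u v r : V} (huv : G.Adj u v) (pu : G.Path u r) (pv : G.Path v r) :
    (∃ q : G.Walk v r, pu.1 = Walk.cons huv q) ∨
    (∃ q : G.Walk u r, pv.1 = Walk.cons huv.symm q) := by
  by_cases hmem : u ∈ pv.1.support
  · right
    have ht : (pv.1.takeUntil u hmem).IsPath := pv.2.takeUntil hmem
    have huniq : (⟨pv.1.takeUntil u hmem, ht⟩ : G.Path v u) = Path.singleton huv.symm :=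
      h.path_unique _ _
    have hval : pv.1.takeUntil u hmem = Walk.cons huv.symm Walk.nil :=
      congrArg Subtype.val huniq
    refine ⟨pv.1.dropUntil u hmem, ?_⟩
    conv_lhs => rw [← pv.1.take_spec hmem]
    rw [hval]
    simp
  · left
    have hp : (Walk.cons huv pv.1).IsPath := pv.2.cons hmem
    have huniq : pu = ⟨Walk.cons huv pv.1, hp⟩ := h.path_unique _ _
    exact ⟨pv.1, congrArg Subtype.val huniq⟩

lemma forest_card_edge {V : Type*} [Fintype V] [DecidableEq V] [Nonempty V]
    (G : SimpleGraph V) [DecidableRel G.Adj] (h : G.IsAcyclic) :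
    G.edgeFinset.card + 1 ≤ Fintype.card V := by
  classical
  set root : V → V := fun v => (G.connectedComponentMk v).out with hroot
  have hmk : ∀ v, G.connectedComponentMk (root v) = G.connectedComponentMk v := by
    intro v
    exact Quot.out_eq _
  have hreach : ∀ v, G.Reachable v (root v) := fun v =>
    (ConnectedComponent.exact (hmk v)).symm
  let P : ∀ v, G.Path v (root v) := fun v => ((hreach v).some).toPath
  -- key property
  have key : ∀ u v, G.Adj u v →
      ((P u).1.getVert 1 = v ∧ u ≠ root u) ∨ ((P v).1.getVert 1 = u ∧ v ≠ root v) := by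
    intro u v huv
    have hrueq : root u = root v := by
      simp only [hroot]
      exact congrArg Quot.out (ConnectedComponent.sound huv.reachable)
    -- length-positive paths have distinct endpoints
    have hne : ∀ (w : V) (q : G.Path w (root w)), 0 < q.1.length → w ≠ root w := by
      intro w q hq hwr
      have hp : (q.1.copy rfl hwr.symm).IsPath := (Walk.isPath_copy _ _ _).mpr q.2
      rw [Walk.isPath_iff_eq_nil] at hp
      have := congrArg Walk.length hp
      rw [Walk.length_copy] at this
      simp only [Walk.length_nil] at this
      omega
    rcases acyclic_first_edge h huv (P u)
        ⟨(P v).1.copy rfl hrueq.symm, (Walk.isPath_copy _ _ _).mpr (P v).2⟩ with ⟨q, hq⟩ | ⟨q, hq⟩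
    · left
      constructor
      · rw [hq]; simp
      · exact hne u (P u) (by rw [hq]; simp)
    · right
      have hq2 : (P v).1 = (Walk.cons huv.symm q).copy rfl hrueq := by
        have h5 : (P v).1.copy rfl hrueq.symm = Walk.cons huv.symm q := hq
        calc (P v).1 = ((P v).1.copy rfl hrueq.symm).copy rfl hrueq := by simp
        _ = (Walk.cons huv.symm q).copy rfl hrueq := by rw [h5]
      constructor
      · rw [hq2]
        simp [Walk.getVert_cons_succ]
      · refine hne v (P v) ?_
        rw [hq2]; simp
  -- counting
  let T : Finset V := Finset.univ.filter (fun w => w ≠ root w)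
  have cover : G.edgeFinset ⊆ T.image (fun w => s(w, (P w).1.getVert 1)) := by
    intro e he
    rw [mem_edgeFinset] at he
    induction e with
    | h u v =>
      have hadj : G.Adj u v := he
      rcases key u v hadj with ⟨h1, h2⟩ | ⟨h1, h2⟩
      · refine Finset.mem_image.mpr ⟨u, by simp [T, h2], by rw [h1]⟩
      · refine Finset.mem_image.mpr ⟨v, by simp [T, h2], by rw [h1, Sym2.eq_swap]⟩
  have h1 : G.edgeFinset.card ≤ T.card :=
    le_trans (Finset.card_le_card cover) (Finset.card_image_le)
  obtain ⟨v0⟩ := ‹Nonempty V›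
  have hr0 : root (root v0) = root v0 := by
    simp only [hroot]
    rw [hmk v0]
  have hT : T ⊆ Finset.univ.erase (root v0) := by
    intro w hw
    simp only [T, Finset.mem_filter] at hw
    refine Finset.mem_erase.mpr ⟨?_, Finset.mem_univ _⟩
    rintro rfl
    exact hw.2 hr0.symm
  have h2 : T.card ≤ Fintype.card V - 1 := by
    calc T.card ≤ (Finset.univ.erase (root v0)).card := Finset.card_le_card hT
    _ = Fintype.card V - 1 := by rw [Finset.card_erase_of_mem (Finset.mem_univ _), Finset.card_univ]
  have h3 : 1 ≤ Fintype.card V := Fintype.card_pos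
  omega

lemma one_side_acyclic {V : Type} [DecidableEq V] (G : SimpleGraph V)
    (V1 V2 : Finset V)
    (hbip : ∀ u v, G.Adj u v → (u ∈ V1 ∧ v ∈ V2) ∨ (u ∈ V2 ∧ v ∈ V1))
    (S : Finset V) (hb1 : (S ∩ V2).card = 1) :
    (G.induce (S : Set V)).IsAcyclic := by
  obtain ⟨c, hc⟩ := Finset.card_eq_one.mp hb1
  have hcS : c ∈ S ∧ c ∈ V2 := by
    have := hc ▸ Finset.mem_singleton_self c
    exact Finset.mem_inter.mp this
  apply star_acyclic (⟨c, hcS.1⟩ : (S : Set V))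
  intro u v huv
  have hadj : G.Adj ↑u ↑v := huv
  rcases hbip _ _ hadj with ⟨h1, h2⟩ | ⟨h1, h2⟩
  · right
    apply Subtype.ext
    have : (↑v : V) ∈ S ∩ V2 := Finset.mem_inter.mpr ⟨by exact_mod_cast v.2, h2⟩
    rw [hc] at this
    exact Finset.mem_singleton.mp this
  · left
    apply Subtype.ext
    have : (↑u : V) ∈ S ∩ V2 := Finset.mem_inter.mpr ⟨by exact_mod_cast u.2, h1⟩
    rw [hc] at this
    exact Finset.mem_singleton.mp this

lemma no_forest {V : Type} [Fintype V] [DecidableEq V] (G : SimpleGraph V)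
    [DecidableRel G.Adj] (n : ℕ) (hodd : Odd n) (V1 V2 : Finset V)
    (hdisj : Disjoint V1 V2) (hunion : V1 ∪ V2 = Finset.univ)
    (hc2 : V2.card = n)
    (hbip : ∀ u v, G.Adj u v → (u ∈ V1 ∧ v ∈ V2) ∨ (u ∈ V2 ∧ v ∈ V1))
    (hdeg : ∀ v, n + 2 ≤ 2 * G.degree v)
    (S : Finset V) (hS : S.card = n + 1)
    (ha2 : 2 ≤ (S ∩ V1).card) (hwl : 2 * (S ∩ V1).card ≤ n + 1) :
    ¬ (G.induce (S : Set V)).IsAcyclic := by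
  intro hac
  classical
  set Gi := G.induce (S : Set V) with hGi
  haveI : DecidableRel Gi.Adj := Classical.decRel _
  have hSne : S.Nonempty := Finset.card_pos.mp (by omega)
  haveI : Nonempty (S : Set V) := hSne.to_subtype
  -- edge bound
  have hE : Gi.edgeFinset.card + 1 ≤ n + 1 := by
    have := forest_card_edge Gi hac
    simp only [Finset.coe_sort_coe, Fintype.card_coe, hS] at this
    exact this
  set E := Gi.edgeFinset.card with hEdef
  -- degrees in the induced graph
  have hdegS : ∀ (u : V) (hu : u ∈ S),
      Gi.degree ⟨u, by exact_mod_cast hu⟩ = (S.filter (fun w => G.Adj u w)).card := by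
    intro u hu
    rw [← card_neighborFinset_eq_degree]
    refine Finset.card_bij (fun w _ => (w : V)) ?_ ?_ ?_
    · intro a ha
      rw [mem_neighborFinset] at ha
      exact Finset.mem_filter.mpr ⟨by exact_mod_cast a.2, ha⟩
    · intro a _ b _ hab
      exact Subtype.ext hab
    · intro b hb
      rw [Finset.mem_filter] at hb
      exact ⟨⟨b, by exact_mod_cast hb.1⟩, by rw [mem_neighborFinset]; exact hb.2, rfl⟩
  -- total degree sum
  have hsum : ∑ u ∈ S, (S.filter (fun w => G.Adj u w)).card = 2 * E := by
    rw [hEdef, ← Gi.sum_degrees_eq_twice_card_edges]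
    rw [← Finset.sum_coe_sort S (fun u => (S.filter (fun w => G.Adj u w)).card)]
    apply Finset.sum_congr rfl
    intro v _
    exact (hdegS v.1 (by exact_mod_cast v.2)).symm
  -- partition of S
  set A := S ∩ V1 with hA
  set B := S ∩ V2 with hB
  have hSAB : S = A ∪ B := by
    ext u
    simp only [hA, hB, Finset.mem_union, Finset.mem_inter]
    constructor
    · intro hu
      have hmem : u ∈ V1 ∪ V2 := by rw [hunion]; exact Finset.mem_univ u
      rcases Finset.mem_union.mp hmem with h | h
      · exact Or.inl ⟨hu, h⟩
      · exact Or.inr ⟨hu, h⟩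
    · rintro (⟨h, _⟩ | ⟨h, _⟩) <;> exact h
  have hABdisj : Disjoint A B :=
    hdisj.mono (Finset.inter_subset_right) (Finset.inter_subset_right)
  have hsplit : ∑ u ∈ A, (S.filter (fun w => G.Adj u w)).card
      + ∑ u ∈ B, (S.filter (fun w => G.Adj u w)).card = 2 * E := by
    rw [← Finset.sum_union hABdisj, ← hSAB, hsum]
  -- restrict the filters
  have hfilterA : ∀ u ∈ A, S.filter (fun w => G.Adj u w) = B.filter (fun w => G.Adj u w) := by
    intro u hu
    rcases Finset.mem_inter.mp hu with ⟨huS, huV1⟩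
    ext w
    simp only [Finset.mem_filter, hB, Finset.mem_inter]
    constructor
    · rintro ⟨hwS, hadj⟩
      refine ⟨⟨hwS, ?_⟩, hadj⟩
      rcases hbip u w hadj with ⟨_, h2⟩ | ⟨h1, _⟩
      · exact h2
      · exact absurd h1 (Finset.disjoint_left.mp hdisj huV1)
    · rintro ⟨⟨hwS, _⟩, hadj⟩; exact ⟨hwS, hadj⟩
  have hfilterB : ∀ w ∈ B, S.filter (fun u => G.Adj w u) = A.filter (fun u => G.Adj w u) := by
    intro w hw
    rcases Finset.mem_inter.mp hw with ⟨hwS, hwV2⟩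
    ext u
    simp only [Finset.mem_filter, hA, Finset.mem_inter]
    constructor
    · rintro ⟨huS, hadj⟩
      refine ⟨⟨huS, ?_⟩, hadj⟩
      rcases hbip w u hadj with ⟨h1, _⟩ | ⟨_, h2⟩
      · exact absurd h1 (Finset.disjoint_right.mp hdisj hwV2)
      · exact h2
    · rintro ⟨⟨huS, _⟩, hadj⟩; exact ⟨huS, hadj⟩
  -- double counting: the two halves of the degree sum are equal
  have heq : ∑ u ∈ A, (S.filter (fun w => G.Adj u w)).card
      = ∑ w ∈ B, (S.filter (fun u => G.Adj w u)).card := by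
    have e1 : ∑ u ∈ A, (S.filter (fun w => G.Adj u w)).card
        = ∑ u ∈ A, (B.filter (fun w => G.Adj u w)).card :=
      Finset.sum_congr rfl (fun u hu => by rw [hfilterA u hu])
    have e2 : ∑ w ∈ B, (S.filter (fun u => G.Adj w u)).card
        = ∑ w ∈ B, (A.filter (fun u => G.Adj w u)).card :=
      Finset.sum_congr rfl (fun w hw => by rw [hfilterB w hw])
    rw [e1, e2]
    simp_rw [Finset.card_filter]
    rw [Finset.sum_comm]
    refine Finset.sum_congr rfl fun w _ => Finset.sum_congr rfl fun u _ => ?_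
    exact if_congr ⟨fun h => h.symm, fun h => h.symm⟩ rfl rfl
  have hSA : ∑ u ∈ A, (S.filter (fun w => G.Adj u w)).card = E := by omega
  -- degree lower bound on A
  have hkey : ∀ u ∈ A, n + 3 ≤ 2 * ((S.filter (fun w => G.Adj u w)).card + (V2 \ S).card) := by
    intro u hu
    rcases Finset.mem_inter.mp hu with ⟨huS, huV1⟩
    have h1 : n + 3 ≤ 2 * G.degree u := by
      obtain ⟨m, hm⟩ := hodd
      have := hdeg u
      omega
    have h2 : G.degree u ≤ (S.filter (fun w => G.Adj u w)).card + (V2 \ S).card := by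
      rw [← card_neighborFinset_eq_degree]
      refine le_trans (Finset.card_le_card ?_) (Finset.card_union_le _ _)
      intro w hw
      rw [mem_neighborFinset] at hw
      have hwV2 : w ∈ V2 := by
        rcases hbip u w hw with ⟨_, h⟩ | ⟨h, _⟩
        · exact h
        · exact absurd h (Finset.disjoint_left.mp hdisj huV1)
      by_cases hwS : w ∈ S
      · exact Finset.mem_union.mpr (Or.inl (Finset.mem_filter.mpr ⟨hwS, hw⟩))
      · exact Finset.mem_union.mpr (Or.inr (Finset.mem_sdiff.mpr ⟨hwV2, hwS⟩))
    omega
  have hsumA : A.card * (n + 3)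
      ≤ 2 * (∑ u ∈ A, (S.filter (fun w => G.Adj u w)).card + A.card * (V2 \ S).card) := by
    calc A.card * (n + 3) = ∑ _u ∈ A, (n + 3) := by rw [Finset.sum_const, smul_eq_mul]
    _ ≤ ∑ u ∈ A, 2 * ((S.filter (fun w => G.Adj u w)).card + (V2 \ S).card) :=
        Finset.sum_le_sum hkey
    _ = 2 * (∑ u ∈ A, (S.filter (fun w => G.Adj u w)).card + A.card * (V2 \ S).card) := by
        rw [← Finset.mul_sum, Finset.sum_add_distrib, Finset.sum_const, smul_eq_mul]
  have hcardAB : A.card + B.card = n + 1 := by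
    rw [← Finset.card_union_of_disjoint hABdisj, ← hSAB, hS]
  have hk : B.card + (V2 \ S).card = n := by
    rw [hB, Finset.inter_comm, Finset.card_inter_add_card_sdiff, hc2]
  -- final arithmetic
  rw [hSA] at hsumA
  set a := A.card
  set k := (V2 \ S).card
  have hka : k + 1 = a := by omega
  have hEn : E ≤ n := by omega
  obtain ⟨c, hc'⟩ : ∃ c, a = c + 2 := ⟨a - 2, by omega⟩
  obtain ⟨d, hd⟩ : ∃ d, n + 1 = 2 * a + d := ⟨n + 1 - 2 * a, by omega⟩
  nlinarith [hsumA, hka, hEn, hc', hd]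

theorem stmt7 {V : Type} [Fintype V] [DecidableEq V] (G : SimpleGraph V)
    [DecidableRel G.Adj] (n : ℕ) (hodd : Odd n) (V1 V2 : Finset V)
    (hdisj : Disjoint V1 V2) (hunion : V1 ∪ V2 = Finset.univ)
    (hc1 : V1.card = n) (hc2 : V2.card = n)
    (hbip : ∀ u v, G.Adj u v → (u ∈ V1 ∧ v ∈ V2) ∨ (u ∈ V2 ∧ v ∈ V1))
    (hdeg : ∀ v, n + 2 ≤ 2 * G.degree v)
    (S : Finset V) (hS : S.card = n + 1) :
    (G.induce (S : Set V)).IsAcyclic ↔ min (S ∩ V1).card (S ∩ V2).card = 1 := by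
  classical
  have hU : (S ∩ V1) ∪ (S ∩ V2) = S := by
    ext u
    simp only [Finset.mem_union, Finset.mem_inter]
    constructor
    · rintro (⟨h, _⟩ | ⟨h, _⟩) <;> exact h
    · intro hu
      have : u ∈ V1 ∪ V2 := by rw [hunion]; exact Finset.mem_univ u
      rcases Finset.mem_union.mp this with h | h
      · exact Or.inl ⟨hu, h⟩
      · exact Or.inr ⟨hu, h⟩
  have hd : Disjoint (S ∩ V1) (S ∩ V2) :=
    hdisj.mono Finset.inter_subset_right Finset.inter_subset_right
  have hcards : (S ∩ V1).card + (S ∩ V2).card = n + 1 := by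
    rw [← Finset.card_union_of_disjoint hd, hU, hS]
  have hb1 : (S ∩ V1).card ≤ n := hc1 ▸ Finset.card_le_card Finset.inter_subset_right
  have hb2 : (S ∩ V2).card ≤ n := hc2 ▸ Finset.card_le_card Finset.inter_subset_right
  constructor
  · intro hac
    by_contra hmin
    have ha2 : 2 ≤ (S ∩ V1).card ∧ 2 ≤ (S ∩ V2).card := by omega
    rcases le_or_gt (2 * (S ∩ V1).card) (n + 1) with hw | hw
    · exact no_forest G n hodd V1 V2 hdisj hunion hc2 hbip hdeg S hS ha2.1 hw hac
    · have hw2 : 2 * (S ∩ V2).card ≤ n + 1 := by omega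
      exact no_forest G n hodd V2 V1 hdisj.symm (by rw [Finset.union_comm]; exact hunion) hc1
        (fun u v h => (hbip u v h).symm) hdeg S hS ha2.2 hw2 hac
  · intro hmin
    have hcase : (S ∩ V1).card = 1 ∨ (S ∩ V2).card = 1 := by omega
    rcases hcase with h | h
    · exact one_side_acyclic G V2 V1 (fun u v hadj => (hbip u v hadj).symm) S h
    · exact one_side_acyclic G V1 V2 hbip S h
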